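/- If (Y,S) is totally minimal and M ⊆ Y×X is a minimal subset of a product system satisfying (S^n × id_X)M = M for some n ≠ 0 and M projects onto X, then M = Y×X. -/

import Mathlib

/-- The group of self-homeomorphisms under composition, so that `T ^ n` (`n : ℤ`)
denotes the `n`-th iterate of `T`. -/
instance Homeomorph.instGroupOld {X : Type*} [TopologicalSpace X] : Group (X ≃ₜ X) where
  mul f g := g.trans f
  one := Homeomorph.refl X
  inv := Homeomorph.symm
  mul_assoc _ _ _ := Homeomorph.ext fun _ => rfl
  one_mul _ := Homeomorph.ext fun _ => rfl
  mul_one _ := Homeomorph.ext fun _ => rfl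
  inv_mul_cancel f := Homeomorph.ext fun x => f.symm_apply_apply x

/-- The orbit closure of a point under a homeomorphism. -/
def orbitCl {X : Type*} [TopologicalSpace X] (T : X ≃ₜ X) (p : X) : Set X :=
  closure {q | ∃ n : ℤ, (T ^ n) p = q}

/-- A (minimal) dynamical system: every orbit closure is everything. -/
def IsMinimalSys {X : Type*} [TopologicalSpace X] (T : X ≃ₜ X) : Prop :=
  ∀ x : X, orbitCl T x = Set.univ

/-- Totally minimal: every nonzero power is minimal. -/
def IsTotallyMinimal {X : Type*} [TopologicalSpace X] (T : X ≃ₜ X) : Prop :=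
  ∀ n : ℤ, n ≠ 0 → IsMinimalSys (T ^ n)

/-- The graph Γ_n = {(T^n x, x) : x ∈ X}. -/
def graphPow {X : Type*} [TopologicalSpace X] (T : X ≃ₜ X) (n : ℤ) : Set (X × X) :=
  {p | ∃ x : X, p = ((T ^ n) x, x)}

/-- POD: totally minimal and for distinct u, v some graph Γ_n (n ≠ 0) lies in the
orbit closure of (u, v) under T × T. -/
def IsPOD {X : Type*} [TopologicalSpace X] (T : X ≃ₜ X) : Prop :=
  IsMinimalSys T ∧ IsTotallyMinimal T ∧
    ∀ u v : X, u ≠ v → ∃ n : ℤ, n ≠ 0 ∧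
      graphPow T n ⊆ orbitCl (T.prodCongr T) (u, v)

/-- Doubly minimal: minimal, and every orbit closure of T × T is either everything
or a graph Γ_m. -/
def IsDoublyMinimal {X : Type*} [TopologicalSpace X] (T : X ≃ₜ X) : Prop :=
  IsMinimalSys T ∧
    ∀ p : X × X, orbitCl (T.prodCongr T) p = Set.univ ∨
      ∃ m : ℤ, orbitCl (T.prodCongr T) p = graphPow T m

/-- A factor map: continuous equivariant surjection. -/
def IsFactorMap {X Y : Type*} [TopologicalSpace X] [TopologicalSpace Y]
    (T : X ≃ₜ X) (S : Y ≃ₜ Y) (π : X → Y) : Prop :=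
  Continuous π ∧ Function.Surjective π ∧ ∀ x, π (T x) = S (π x)

/-- Disjointness: the only closed invariant subset of the product projecting
onto both coordinates is the whole product. -/
def SysDisjoint {X Y : Type*} [TopologicalSpace X] [TopologicalSpace Y]
    (T : X ≃ₜ X) (S : Y ≃ₜ Y) : Prop :=
  ∀ M : Set (X × Y), IsClosed M → (T.prodCongr S) '' M = M →
    Prod.fst '' M = Set.univ → Prod.snd '' M = Set.univ → M = Set.univ

/-- A recurrent point: in the closure of its forward orbit with positive times. -/
def IsRecurrentPt {X : Type*} [TopologicalSpace X] (T : X ≃ₜ X) (x : X) : Prop :=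
  x ∈ closure {q | ∃ n : ℕ, 1 ≤ n ∧ (T ^ n) x = q}

/-- A proximal pair: the orbits come arbitrarily close together. -/
def IsProximal {X : Type*} [PseudoMetricSpace X] (T : X ≃ₜ X) (x x' : X) : Prop :=
  ∀ ε > 0, ∃ n : ℤ, dist ((T ^ n) x) ((T ^ n) x') < ε

/-- A distal point: proximal only to itself. -/
def IsDistalPt {X : Type*} [PseudoMetricSpace X] (T : X ≃ₜ X) (x : X) : Prop :=
  ∀ x', IsProximal T x x' → x' = x

/-- A minimal subset: nonempty, closed, invariant, with all orbits dense in it. -/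
def IsMinimalSubset {X : Type*} [TopologicalSpace X] (T : X ≃ₜ X) (M : Set X) : Prop :=
  M.Nonempty ∧ IsClosed M ∧ (T : X ≃ₜ X) '' M = M ∧
    ∀ p ∈ M, M ⊆ closure {q | ∃ n : ℤ, (T ^ n) p = q}

/-- Topological transitivity. -/
def IsTopTransitive {X : Type*} [TopologicalSpace X] (T : X ≃ₜ X) : Prop :=
  ∀ U V : Set X, IsOpen U → IsOpen V → U.Nonempty → V.Nonempty →
    ∃ n : ℤ, ((T ^ n) '' U ∩ V).Nonempty

/-- Weak mixing: the product system is topologically transitive. -/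
def IsWeaklyMixing {X : Type*} [TopologicalSpace X] (T : X ≃ₜ X) : Prop :=
  IsTopTransitive (T.prodCongr T)

theorem totallyMinimal_invariant_minimalSubset_eq_univ {X Y : Type*} [MetricSpace X] [CompactSpace X] [MetricSpace Y] [CompactSpace Y]
    (T : X ≃ₜ X) (S : Y ≃ₜ Y) (hS : IsTotallyMinimal S)
    (M : Set (Y × X)) (hM : IsMinimalSubset (S.prodCongr T) M)
    (n : ℤ) (hn : n ≠ 0)
    (hinv : ((S ^ n).prodCongr (Homeomorph.refl X)) '' M = M)
    (hproj : Prod.snd '' M = Set.univ) :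
    M = Set.univ := by
  obtain ⟨hne, hclosed, hTinv, hmin⟩ := hM
  have hmul : ∀ (f g : Y ≃ₜ Y) (y : Y), (f * g) y = f (g y) := fun _ _ _ => rfl
  -- every fiber of M is invariant under all powers of S^n
  have key : ∀ (x : X) (y : Y), (y, x) ∈ M → ∀ k : ℤ, (((S ^ n) ^ k) y, x) ∈ M := by
    intro x y hy k
    induction k using Int.induction_on with
    | zero => simpa using hy
    | succ k ih =>
        have h1 : ((S ^ n).prodCongr (Homeomorph.refl X)) (((S ^ n) ^ (k : ℤ)) y, x) ∈ M := by
          rw [← hinv]; exact Set.mem_image_of_mem _ ih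
        have h2 : ((S ^ n) ^ ((k : ℤ) + 1)) y = (S ^ n) (((S ^ n) ^ (k : ℤ)) y) := by
          rw [show ((k : ℤ) + 1) = 1 + (k : ℤ) by ring, zpow_add, zpow_one, hmul]
        rw [h2]
        exact h1
    | pred k ih =>
        have h1 : (((S ^ n) ^ (-(k : ℤ))) y, x) ∈
            ((S ^ n).prodCongr (Homeomorph.refl X)) '' M := by rw [hinv]; exact ih
        obtain ⟨⟨y', x'⟩, hy', heq⟩ := h1
        have hx' : x' = x := congrArg Prod.snd heq
        have hy'' : (S ^ n) y' = ((S ^ n) ^ (-(k : ℤ))) y := congrArg Prod.fst heq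
        have h2 : ((S ^ n) ^ (-(k : ℤ) - 1)) y = y' := by
          have h3 : (S ^ n) (((S ^ n) ^ (-(k : ℤ) - 1)) y) = (S ^ n) y' := by
            rw [hy'', ← hmul, ← zpow_one_add]
            norm_num
          exact (S ^ n).injective h3
        rw [h2, ← hx']
        exact hy'
  rw [Set.eq_univ_iff_forall]
  rintro ⟨y, x⟩
  have hx : x ∈ Prod.snd '' M := by rw [hproj]; trivial
  obtain ⟨⟨y₀, x'⟩, hm, hx'⟩ := hx
  cases hx'
  have hfibclosed : IsClosed {z : Y | (z, x') ∈ M} :=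
    hclosed.preimage (continuous_id.prodMk continuous_const)
  have horb : {q | ∃ k : ℤ, ((S ^ n) ^ k) y₀ = q} ⊆ {z : Y | (z, x') ∈ M} := by
    rintro q ⟨k, rfl⟩; exact key _ _ hm k
  have hy : y ∈ closure {q | ∃ k : ℤ, ((S ^ n) ^ k) y₀ = q} := by
    have h : closure {q | ∃ k : ℤ, ((S ^ n) ^ k) y₀ = q} = Set.univ := hS n hn y₀
    rw [h]; trivial
  exact closure_minimal horb hfibclosed hy
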